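/- Let Γ be an abelian group, K a field, ε a commutation factor on Γ over K, D a natural number, and φ : Fin D → Γ, and assume tr_ε(1) = Σ_i ε(φ(i), φ(i)) ≠ 0 in K. Let d ∈ Γ and let X : M_D(K) → M_D(K) be a K-linear map such that for all i, j the matrix X(E_{ij}) is homogeneous of degree φ(i) − φ(j) + d, and for all i, j, k, l: X(E_{ij}·E_{kl}) = X(E_{ij})·E_{kl} + ε(d, φ(i) − φ(j))·E_{ij}·X(E_{kl}). Then there exists a UNIQUE matrix M ∈ M_D(K) which is homogeneous of degree d and ε-traceless (tr_ε(M) = 0) such that X(E_{ij}) = M·E_{ij} − ε(d, φ(i) − φ(j))·E_{ij}·M for all i, j; that is, the adjoint representation is an isomorphism from the ε-traceless matrices sl_ε(D,K) onto the ε-derivations of the elementary ε-graded matrix algebra. -/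

import Mathlib

/-- A commutation factor on an abelian group `Γ` over a field `K`. -/
def IsCommFactor {Γ K : Type*} [AddCommGroup Γ] [Field K] (ε : Γ → Γ → Kˣ) : Prop :=
  (∀ i j, ε i j * ε j i = 1) ∧
  (∀ i j k, ε i (j + k) = ε i j * ε i k) ∧
  (∀ i j k, ε (i + j) k = ε i k * ε j k)

private lemma mulE_apply {K : Type*} [Field K] {D : ℕ} (A : Matrix (Fin D) (Fin D) K)
    (k l p q : Fin D) :
    (A * Matrix.single k l (1:K)) p q = if q = l then A p k else 0 := by
  simp [Matrix.mul_apply, Matrix.single, Matrix.of_apply, ite_and, eq_comm]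

private lemma Emul_apply {K : Type*} [Field K] {D : ℕ} (A : Matrix (Fin D) (Fin D) K)
    (k l p q : Fin D) :
    (Matrix.single k l (1:K) * A) p q = if p = k then A l q else 0 := by
  simp [Matrix.mul_apply, Matrix.single, Matrix.of_apply, ite_and, eq_comm]

theorem statement12 {Γ K : Type*} [AddCommGroup Γ] [Field K]
    (ε : Γ → Γ → Kˣ) (hε : IsCommFactor ε)
    (D : ℕ) (φ : Fin D → Γ)
    (htr : (∑ i, (ε (φ i) (φ i) : K)) ≠ 0)
    (d : Γ)
    (X : Matrix (Fin D) (Fin D) K →ₗ[K] Matrix (Fin D) (Fin D) K)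
    (hhom : ∀ i j k l : Fin D, φ k - φ l ≠ φ i - φ j + d →
      X (Matrix.single i j 1) k l = 0)
    (hleib : ∀ i j k l : Fin D,
      X (Matrix.single i j 1 * Matrix.single k l 1) =
      X (Matrix.single i j 1) * Matrix.single k l 1 +
      (ε d (φ i - φ j) : K) •
        (Matrix.single i j 1 * X (Matrix.single k l 1))) :
    ∃! M : Matrix (Fin D) (Fin D) K,
      (∀ k l : Fin D, φ k - φ l ≠ d → M k l = 0) ∧
      (∑ i, (ε (φ i) (φ i) : K) * M i i) = 0 ∧
      (∀ i j : Fin D, X (Matrix.single i j 1) =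
        M * Matrix.single i j 1 -
        (ε d (φ i - φ j) : K) • (Matrix.single i j 1 * M)) := by
  classical
  obtain ⟨hsym, hradd, hladd⟩ := hε
  have hD : 0 < D := by
    rcases Nat.eq_zero_or_pos D with h | h
    · subst h; simp at htr
    · exact h
  have i0 : Fin D := ⟨0, hD⟩
  -- ε facts at the level of K
  have hdadd : ∀ x y : Γ, (ε d (x + y) : K) = (ε d x : K) * (ε d y : K) := by
    intro x y; rw [hradd]; exact Units.val_mul _ _
  have hd0 : (ε d 0 : K) = 1 := by
    have h := hradd d 0 0
    rw [add_zero] at h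
    have h1 : (ε d 0 : Kˣ) = 1 := left_eq_mul.mp h
    simp [h1]
  have hz0 : ∀ x : Γ, (ε (0:Γ) x : K) = 1 := by
    intro x
    have h := hladd 0 0 x
    rw [add_zero] at h
    have h1 : (ε (0:Γ) x : Kˣ) = 1 := left_eq_mul.mp h
    simp [h1]
  have hchain : ∀ x y z : Γ,
      (ε d (x - y) : K) * (ε d (y - z) : K) = (ε d (x - z) : K) := by
    intro x y z; rw [← hdadd, sub_add_sub_cancel]
  -- entrywise Leibniz rule
  have hleib' : ∀ i j k l p q : Fin D,
      X (Matrix.single i j (1:K) * Matrix.single k l (1:K)) p q =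
      (X (Matrix.single i j (1:K)) * Matrix.single k l (1:K)) p q +
      (ε d (φ i - φ j) : K) *
        ((Matrix.single i j (1:K) * X (Matrix.single k l (1:K))) p q) := by
    intro i j k l p q
    have h := congrFun (congrFun (hleib i j k l) p) q
    simpa [Matrix.add_apply, Matrix.smul_apply, smul_eq_mul] using h
  -- diagonal entries of X(E i i) vanish
  have hdiag0 : ∀ i : Fin D, X (Matrix.single i i (1:K)) i i = 0 := by
    intro i
    have h := hleib' i i i i i i
    rw [Matrix.single_mul_single_same, one_mul, mulE_apply, Emul_apply] at h
    simp only [eq_self_iff_true, if_true, sub_self, hd0, one_mul] at h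
    linear_combination -h
  -- rows k ≠ i of X(E i j)
  have hR1 : ∀ i j k l : Fin D, k ≠ i →
      X (Matrix.single i j (1:K)) k l =
        if l = j then X (Matrix.single i i (1:K)) k i else 0 := by
    intro i j k l hk
    have h := hleib' i i i j k l
    rw [Matrix.single_mul_single_same, one_mul, mulE_apply, Emul_apply] at h
    simp only [if_neg hk, sub_self, hd0, one_mul, mul_zero, add_zero] at h
    exact h
  -- row i of X(E i j)
  have hR2 : ∀ i j l : Fin D,
      X (Matrix.single i j (1:K)) i l =
        (if l = j then X (Matrix.single i j (1:K)) i j else 0) +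
        (ε d (φ i - φ j) : K) * X (Matrix.single j j (1:K)) j l := by
    intro i j l
    have h := hleib' i j j j i l
    rw [Matrix.single_mul_single_same, one_mul, mulE_apply, Emul_apply] at h
    simp only [eq_self_iff_true, if_true] at h
    exact h
  -- orthogonality
  have horth : ∀ j l : Fin D, j ≠ l →
      X (Matrix.single j j (1:K)) j l +
        X (Matrix.single l l (1:K)) j l = 0 := by
    intro j l hjl
    have h := hleib' j j l l j l
    rw [Matrix.single_mul_single_of_ne (1:K) j j l hjl (1:K), map_zero, Matrix.zero_apply,
      mulE_apply, Emul_apply] at h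
    simp only [eq_self_iff_true, if_true, sub_self, hd0, one_mul] at h
    linear_combination -h
  -- cocycle identity
  have hco : ∀ i j l : Fin D,
      X (Matrix.single i l (1:K)) i l =
        X (Matrix.single i j (1:K)) i j +
        (ε d (φ i - φ j) : K) * X (Matrix.single j l (1:K)) j l := by
    intro i j l
    have h := hleib' i j j l i l
    rw [Matrix.single_mul_single_same, one_mul, mulE_apply, Emul_apply] at h
    simp only [eq_self_iff_true, if_true] at h
    exact h
  -- the candidate matrix
  set b : Fin D → K := fun i => X (Matrix.single i i0 (1:K)) i i0 with hb
  set εi : Fin D → K := fun i => (ε d (φ i - φ i0) : K) with hεi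
  set S : K := ∑ p, (ε (φ p) (φ p) : K) * εi p with hS
  set c : K := -(∑ p, (ε (φ p) (φ p) : K) * b p) / S with hc
  set M : Matrix (Fin D) (Fin D) K := Matrix.of (fun p q =>
    if p = q then b p + εi p * c else X (Matrix.single q q (1:K)) p q) with hM
  have hMentry : ∀ p q, M p q =
      if p = q then b p + εi p * c else X (Matrix.single q q (1:K)) p q :=
    fun p q => rfl
  -- cocycle in terms of b
  have hcob : ∀ i j : Fin D,
      X (Matrix.single i j (1:K)) i j = b i - (ε d (φ i - φ j) : K) * b j := by
    intro i j
    have h := hco i j i0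
    have hbi : b i = X (Matrix.single i i0 (1:K)) i i0 := rfl
    have hbj : b j = X (Matrix.single j i0 (1:K)) j i0 := rfl
    rw [hbi, hbj]
    linear_combination -h
  -- key diagonal-combination identity
  have hdiagM : ∀ i j : Fin D,
      M i i - (ε d (φ i - φ j) : K) * M j j = X (Matrix.single i j (1:K)) i j := by
    intro i j
    rw [hMentry, hMentry, if_pos rfl, if_pos rfl, hcob i j]
    have h1 : (ε d (φ i - φ j) : K) * εi j = εi i := hchain (φ i) (φ j) (φ i0)
    linear_combination (-c) * h1
  -- vanishing of b and c when d ≠ 0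
  have hbzero : d ≠ 0 → ∀ p, b p = 0 := by
    intro hd p
    exact hhom p i0 p i0 (fun h => hd (left_eq_add.mp h))
  have hczero : d ≠ 0 → c = 0 := by
    intro hd
    rw [hc]
    have h : (∑ p, (ε (φ p) (φ p) : K) * b p) = 0 :=
      Finset.sum_eq_zero (fun p _ => by rw [hbzero hd p, mul_zero])
    rw [h, neg_zero, zero_div]
  -- homogeneity of M
  have hhomM : ∀ k l : Fin D, φ k - φ l ≠ d → M k l = 0 := by
    intro k l hkl
    rw [hMentry]
    by_cases hk : k = l
    · subst hk
      rw [if_pos rfl]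
      have hd : d ≠ 0 := fun h => hkl (by rw [h, sub_self])
      rw [hbzero hd, hczero hd, mul_zero, add_zero]
    · rw [if_neg hk]
      exact hhom l l k l (by rwa [sub_self, zero_add])
  -- trace of M vanishes
  have htrM : (∑ i, (ε (φ i) (φ i) : K) * M i i) = 0 := by
    have hsum : (∑ i, (ε (φ i) (φ i) : K) * M i i) =
        (∑ p, (ε (φ p) (φ p) : K) * b p) + S * c := by
      rw [hS, Finset.sum_mul, ← Finset.sum_add_distrib]
      exact Finset.sum_congr rfl (fun p _ => by rw [hMentry, if_pos rfl]; ring)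
    rw [hsum]
    by_cases hd : d = 0
    · have hSeq : S = ∑ p, (ε (φ p) (φ p) : K) := by
        rw [hS]
        refine Finset.sum_congr rfl (fun p _ => ?_)
        have h : εi p = (ε d (φ p - φ i0) : K) := rfl
        rw [h, hd, hz0, mul_one]
      rw [hc, hSeq, mul_comm, div_mul_cancel₀ _ htr]
      ring
    · have h1 : (∑ p, (ε (φ p) (φ p) : K) * b p) = 0 :=
        Finset.sum_eq_zero (fun p _ => by rw [hbzero hd p, mul_zero])
      rw [h1, hczero hd, mul_zero, add_zero]
  -- the defining equation
  have heqM : ∀ i j : Fin D, X (Matrix.single i j (1:K)) =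
      M * Matrix.single i j (1:K) -
      (ε d (φ i - φ j) : K) • (Matrix.single i j (1:K) * M) := by
    intro i j
    ext k l
    rw [Matrix.sub_apply, Matrix.smul_apply, smul_eq_mul, mulE_apply, Emul_apply]
    by_cases hk : k = i
    · rw [if_pos hk, hk]
      by_cases hl : l = j
      · rw [if_pos hl, hl, ← hdiagM i j]
      · rw [if_neg hl, hR2 i j l, if_neg hl, zero_add, zero_sub]
        have hjl : j ≠ l := fun h => hl h.symm
        rw [hMentry j l, if_neg hjl]
        have h := horth j l hjl
        linear_combination (ε d (φ i - φ j) : K) * h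
    · rw [if_neg hk, mul_zero, sub_zero, hR1 i j k l hk]
      by_cases hl : l = j
      · rw [if_pos hl, if_pos hl, hMentry k i, if_neg hk]
      · rw [if_neg hl, if_neg hl]
  refine ⟨M, ⟨hhomM, htrM, heqM⟩, ?_⟩
  -- uniqueness
  rintro M' ⟨h1, h2, h3⟩
  have key : ∀ i j k l : Fin D,
      (if l = j then M' k i else 0) -
        (ε d (φ i - φ j) : K) * (if k = i then M' j l else 0) =
      (if l = j then M k i else 0) -
        (ε d (φ i - φ j) : K) * (if k = i then M j l else 0) := by
    intro i j k l
    have h := (h3 i j).symm.trans (heqM i j)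
    have h' := congrFun (congrFun h k) l
    rw [Matrix.sub_apply, Matrix.sub_apply, Matrix.smul_apply, Matrix.smul_apply,
      smul_eq_mul, smul_eq_mul, mulE_apply, mulE_apply, Emul_apply, Emul_apply] at h'
    exact h'
  have hoff : ∀ p q : Fin D, p ≠ q → M' p q = M p q := by
    intro p q hpq
    have h := key q q p q
    simp only [eq_self_iff_true, if_true, if_neg hpq, mul_zero, sub_zero] at h
    exact h
  have hdrel : ∀ i j : Fin D,
      M' i i - (ε d (φ i - φ j) : K) * M' j j =
      M i i - (ε d (φ i - φ j) : K) * M j j := by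
    intro i j
    have h := key i j i j
    simp only [eq_self_iff_true, if_true] at h
    exact h
  have hdiagEq : ∀ p : Fin D, M' p p = M p p := by
    by_cases hd : d = 0
    · subst hd
      have hconst : ∀ p : Fin D, M' p p - M p p = M' i0 i0 - M i0 i0 := by
        intro p
        have h := hdrel p i0
        rw [hz0, one_mul, one_mul] at h
        linear_combination h
      have hsum0 : (∑ p, (ε (φ p) (φ p) : K) * (M' p p - M p p)) = 0 := by
        have heq : (∑ p, (ε (φ p) (φ p) : K) * (M' p p - M p p)) =
            (∑ p, (ε (φ p) (φ p) : K) * M' p p) -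
            (∑ p, (ε (φ p) (φ p) : K) * M p p) := by
          rw [← Finset.sum_sub_distrib]
          exact Finset.sum_congr rfl (fun p _ => by ring)
        rw [heq, h2, htrM, sub_zero]
      have hsum1 : (∑ p, (ε (φ p) (φ p) : K)) * (M' i0 i0 - M i0 i0) = 0 := by
        rw [Finset.sum_mul, ← hsum0]
        exact Finset.sum_congr rfl (fun p _ => by rw [hconst p])
      have ht : M' i0 i0 - M i0 i0 = 0 := by
        rcases mul_eq_zero.mp hsum1 with h | h
        · exact absurd h htr
        · exact h
      intro p
      have hp := hconst p
      rw [ht] at hp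
      linear_combination hp
    · intro p
      have hp : φ p - φ p ≠ d := by rw [sub_self]; exact fun h => hd h.symm
      rw [h1 p p hp, hhomM p p hp]
  ext p q
  by_cases hpq : p = q
  · rw [hpq]; exact hdiagEq q
  · exact hoff p q hpq
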